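/- Let Y be a Pareto(α)-distributed stationary ARMAX sequence Y_n = c(Y_{n-1} ∨ W_n) with 0 < c < 1. Then for any m ≥ 1 and x, y > 0, the lag-m upper tail copula is lim_{t→∞} t · P(Y_1 > U(t/x), Y_{1+m} > U(t/y)) = x ∧ (y c^{mα}), where U(s) = s^{1/α}. -/

import Mathlib

open MeasureTheory ProbabilityTheory Filter Real

noncomputable def auxN {Ω : Type*} (c : ℝ) (W : ℕ → Ω → ℝ) : ℕ → Ω → ℝ
  | 0 => fun ω => c * W 2 ω
  | (j+1) => fun ω => c * max (auxN c W j ω) (W (j+3) ω)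

lemma auxN_subset {Ω : Type*} (c : ℝ) (W : ℕ → Ω → ℝ) (hc0 : 0 < c) (hc1 : c ≤ 1)
    (b : ℝ) (hb : 0 ≤ b) :
    ∀ j, {ω | auxN c W j ω > b} ⊆ ⋃ i ∈ Finset.range (j+1), {ω | W (i+2) ω > b / c} := by
  intro j
  induction j with
  | zero =>
    intro ω h
    simp only [auxN, gt_iff_lt, Set.mem_setOf_eq] at h
    simp only [Set.mem_iUnion, Set.mem_setOf_eq, Finset.mem_range]
    exact ⟨0, by norm_num, (div_lt_iff₀ hc0).mpr (by linarith [mul_comm c (W 2 ω)])⟩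
  | succ j ih =>
    intro ω h
    simp only [auxN, gt_iff_lt, Set.mem_setOf_eq] at h
    have hmax : b / c < max (auxN c W j ω) (W (j+3) ω) :=
      (div_lt_iff₀ hc0).mpr (by linarith [mul_comm c (max (auxN c W j ω) (W (j+3) ω))])
    have hbc : b ≤ b / c := by
      rw [le_div_iff₀ hc0]; nlinarith
    rcases lt_max_iff.mp hmax with h1 | h1
    · have hmem : ω ∈ ⋃ i ∈ Finset.range (j+1), {ω | W (i+2) ω > b / c} :=
        ih (by simp only [Set.mem_setOf_eq]; exact lt_of_le_of_lt hbc h1)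
      simp only [Set.mem_iUnion, Set.mem_setOf_eq, Finset.mem_range] at hmem ⊢
      obtain ⟨i, hi, hw⟩ := hmem
      exact ⟨i, by omega, hw⟩
    · simp only [Set.mem_iUnion, Set.mem_setOf_eq, Finset.mem_range]
      exact ⟨j+1, by omega, h1⟩

theorem stmt11
    {Ω : Type*} [MeasurableSpace Ω] (μ : Measure Ω) [IsProbabilityMeasure μ]
    (α c : ℝ) (hα : 0 < α) (hc0 : 0 < c) (hc1 : c < 1)
    (Y W : ℕ → Ω → ℝ)
    (hWm : ∀ n, Measurable (W n)) (hY0m : Measurable (Y 0))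
    -- the innovations together with the initial value form an independent family
    (Z : ℕ → Ω → ℝ) (hZ0 : Z 0 = Y 0) (hZS : ∀ n, Z (n + 1) = W (n + 1))
    (hiid : iIndepFun Z μ)
    -- ARMAX recursion
    (hrec : ∀ n ω, Y (n + 1) ω = c * max (Y n ω) (W (n + 1) ω))
    (hWcdf : ∀ n ≥ 1, ∀ x, (μ {ω | W n ω ≤ x}).toReal =
      if 1 / c ≤ x then (1 - (c * x) ^ (-α)) / (1 - x ^ (-α)) else 0)
    (hY0cdf : ∀ x, (μ {ω | Y 0 ω ≤ x}).toReal = if 1 ≤ x then 1 - x ^ (-α) else 0)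
    (m : ℕ) (hm : 1 ≤ m) (x y : ℝ) (hx : 0 < x) (hy : 0 < y) :
    Tendsto (fun t : ℝ => t * (μ {ω | Y 1 ω > (t / x) ^ (1 / α)
        ∧ Y (1 + m) ω > (t / y) ^ (1 / α)}).toReal)
      atTop (nhds (min x (y * c ^ ((m : ℝ) * α)))) := by
  obtain ⟨k, rfl⟩ : ∃ k, m = k + 1 := ⟨m - 1, by omega⟩
  -- basic measurability
  have hY1m : Measurable (Y 1) := by
    have h : Y 1 = fun ω => c * max (Y 0 ω) (W 1 ω) := funext (hrec 0)
    rw [h]; exact measurable_const.mul (hY0m.max (hWm 1))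
  have hZm : ∀ n, Measurable (Z n) := by
    intro n; cases n with
    | zero => rw [hZ0]; exact hY0m
    | succ n => rw [hZS]; exact hWm _
  -- tail of W
  have hWτ : ∀ n, 1 ≤ n → ∀ u : ℝ, 1/c ≤ u →
      (μ {ω | W n ω > u}).toReal = 1 - (1 - (c*u) ^ (-α)) / (1 - u ^ (-α)) := by
    intro n hn u hu
    have hms : MeasurableSet {ω | W n ω ≤ u} := measurableSet_le (hWm n) measurable_const
    have hset : {ω | W n ω > u} = {ω | W n ω ≤ u}ᶜ := by
      ext ω; simp [not_le]
    rw [hset, prob_compl_eq_one_sub hms,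
      ENNReal.toReal_sub_of_le prob_le_one ENNReal.one_ne_top, ENNReal.toReal_one,
      hWcdf n hn u, if_pos hu]
  -- tail of Y 1
  have hY1τ : ∀ z : ℝ, 1 ≤ z → (μ {ω | Y 1 ω > z}).toReal = z ^ (-α) := by
    intro z hz
    have hzc1 : (1:ℝ) < z / c := by
      rw [lt_div_iff₀ hc0]; linarith
    have hind : IndepFun (Y 0) (W 1) μ := by
      have h := hiid.indepFun (show (0:ℕ) ≠ 1 by decide)
      rwa [hZ0, hZS 0] at h
    have hseteq : {ω | Y 1 ω ≤ z} = (Y 0) ⁻¹' (Set.Iic (z/c)) ∩ (W 1) ⁻¹' (Set.Iic (z/c)) := by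
      ext ω
      simp only [Set.mem_setOf_eq, Set.mem_inter_iff, Set.mem_preimage, Set.mem_Iic]
      rw [hrec 0 ω, mul_comm, ← le_div_iff₀ hc0, max_le_iff]
    have hμ : (μ {ω | Y 1 ω ≤ z}).toReal
        = (μ {ω | Y 0 ω ≤ z/c}).toReal * (μ {ω | W 1 ω ≤ z/c}).toReal := by
      rw [hseteq, hind.measure_inter_preimage_eq_mul _ _ measurableSet_Iic measurableSet_Iic,
        ENNReal.toReal_mul]
      rfl
    have hq : (z/c) ^ (-α) < 1 :=
      Real.rpow_lt_one_of_one_lt_of_neg hzc1 (by linarith)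
    have hval : (μ {ω | Y 1 ω ≤ z}).toReal = 1 - z ^ (-α) := by
      have hne : 1 - (z/c) ^ (-α) ≠ 0 := ne_of_gt (by linarith)
      have hcz : c * (z/c) = z := by field_simp
      rw [hμ, hY0cdf, hWcdf 1 le_rfl, if_pos (by linarith : (1:ℝ) ≤ z/c),
        if_pos (by gcongr : 1/c ≤ z/c), hcz, mul_comm, div_mul_cancel₀ _ hne]
    have hms : MeasurableSet {ω | Y 1 ω ≤ z} := measurableSet_le hY1m measurable_const
    have hset : {ω | Y 1 ω > z} = {ω | Y 1 ω ≤ z}ᶜ := by ext ω; simp [not_le]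
    rw [hset, prob_compl_eq_one_sub hms,
      ENNReal.toReal_sub_of_le prob_le_one ENNReal.one_ne_top, ENNReal.toReal_one, hval]
    ring
  -- independence of Y 1 and W (i+2)
  have hindY1W : ∀ i : ℕ, IndepFun (Y 1) (W (i+2)) μ := by
    intro i
    have h := hiid.indepFun_prodMk hZm 0 1 (i+2) (by omega) (by omega)
    have h2 := h.comp (φ := fun p : ℝ × ℝ => c * max p.1 p.2) (ψ := id)
      (measurable_const.mul (measurable_fst.max measurable_snd)) measurable_id
    have hY1eq : Y 1 = (fun p : ℝ × ℝ => c * max p.1 p.2) ∘ (fun ω => (Z 0 ω, Z 1 ω)) := by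
      funext ω
      simp only [Function.comp_apply, hZ0, hZS 0]
      exact hrec 0 ω
    have hWeq : W (i+2) = id ∘ Z (i+2) := by
      rw [Function.id_comp, hZS (i+1)]
    rw [hY1eq, hWeq]
    exact h2
  -- the ARMAX identity
  have hYN : ∀ j ω, Y (2+j) ω = max (c^(j+1) * Y 1 ω) (auxN c W j ω) := by
    intro j
    induction j with
    | zero =>
      intro ω
      have h := hrec 1 ω
      simp only [auxN, pow_one]
      rw [h, mul_max_of_nonneg _ _ hc0.le]
      norm_num
    | succ j ih =>
      intro ω
      have h1 : Y (2+(j+1)) ω = c * max (Y (2+j) ω) (W (2+j+1) ω) := hrec (2+j) ω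
      rw [show 2+j+1 = j+3 from by omega] at h1
      rw [h1, ih]
      simp only [auxN]
      rw [max_assoc, mul_max_of_nonneg _ _ hc0.le]
      congr 1
      ring
  -- notation
  set M : ℝ := ((k+1 : ℕ) : ℝ) * α with hM
  set K : ℝ := min x (y * c ^ M) with hKdef
  have hcm : (0:ℝ) < c ^ (k+1) := pow_pos hc0 _
  have hcmM : (c ^ (k+1) : ℝ) ^ (-α) = (c ^ M)⁻¹ := by
    rw [← Real.rpow_natCast c (k+1), ← Real.rpow_mul hc0.le,
      show ((k+1:ℕ):ℝ) * (-α) = -M by rw [hM]; ring, Real.rpow_neg hc0.le]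
  -- limit of the upper bound
  have hdiv : Tendsto (fun t:ℝ => y / t) atTop (nhds 0) := by
    simpa [div_eq_mul_inv] using tendsto_inv_atTop_zero.const_mul y
  have hnum : Tendsto (fun t:ℝ => 1 - y/t) atTop (nhds 1) := by
    simpa using tendsto_const_nhds.sub hdiv
  have hden : Tendsto (fun t:ℝ => 1 - (y/t) * c ^ α) atTop (nhds 1) := by
    simpa using tendsto_const_nhds.sub (hdiv.mul_const (c ^ α))
  have hg0 : Tendsto (fun t:ℝ => 1 - (1 - y/t)/(1 - (y/t) * c ^ α)) atTop (nhds 0) := by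
    simpa using (tendsto_const_nhds (x := (1:ℝ))).sub (hnum.div hden one_ne_zero)
  have hub : Tendsto (fun t:ℝ => K + x * ((k:ℝ)+1) * (1 - (1 - y/t)/(1 - (y/t) * c ^ α)))
      atTop (nhds K) := by
    simpa using tendsto_const_nhds.add ((tendsto_const_nhds (x := x * ((k:ℝ)+1))).mul hg0)
  -- main eventual bounds
  have main : ∀ᶠ t in atTop,
      K ≤ t * (μ {ω | Y 1 ω > (t / x) ^ (1 / α) ∧ Y (1 + (k+1)) ω > (t / y) ^ (1 / α)}).toReal
      ∧ t * (μ {ω | Y 1 ω > (t / x) ^ (1 / α) ∧ Y (1 + (k+1)) ω > (t / y) ^ (1 / α)}).toReal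
        ≤ K + x * ((k:ℝ)+1) * (1 - (1 - y/t)/(1 - (y/t) * c ^ α)) := by
    filter_upwards [eventually_ge_atTop (max (max x y) 1 + 1)] with t ht
    have htpos : (0:ℝ) < t := by linarith [le_max_right (max x y) (1:ℝ)]
    have hxt : x ≤ t := by linarith [le_max_left x y, le_max_left (max x y) (1:ℝ)]
    have hyt : y ≤ t := by linarith [le_max_right x y, le_max_left (max x y) (1:ℝ)]
    have htx : 1 ≤ t / x := (le_div_iff₀ hx).mpr (by linarith)
    have hty : 1 ≤ t / y := (le_div_iff₀ hy).mpr (by linarith)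
    set a := (t/x) ^ (1/α) with ha
    set b := (t/y) ^ (1/α) with hb
    have ha1 : 1 ≤ a := by
      have h := Real.rpow_le_rpow zero_le_one htx (by positivity : (0:ℝ) ≤ 1/α)
      simpa [ha] using h
    have hb1 : 1 ≤ b := by
      have h := Real.rpow_le_rpow zero_le_one hty (by positivity : (0:ℝ) ≤ 1/α)
      simpa [hb] using h
    have ha0 : 0 < a := by positivity
    have hb0 : 0 < b := by positivity
    have haneg : a ^ (-α) = x / t := by
      rw [ha, ← Real.rpow_mul (by positivity : (0:ℝ) ≤ t/x),
        show (1/α) * (-α) = -1 by field_simp, Real.rpow_neg_one, inv_div]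
    have hbneg : b ^ (-α) = y / t := by
      rw [hb, ← Real.rpow_mul (by positivity : (0:ℝ) ≤ t/y),
        show (1/α) * (-α) = -1 by field_simp, Real.rpow_neg_one, inv_div]
    have hdneg : (b / c^(k+1)) ^ (-α) = y * c ^ M / t := by
      rw [Real.div_rpow hb0.le hcm.le, hbneg, hcmM, div_inv_eq_mul, div_mul_eq_mul_div]
    set r := max a (b / c^(k+1)) with hr
    have hr1 : 1 ≤ r := le_trans ha1 (le_max_left _ _)
    have hrneg : r ^ (-α) = K / t := by
      rcases le_total a (b / c^(k+1)) with hcase | hcase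
      · rw [hr, max_eq_right hcase, hdneg]
        have h2 : (b / c^(k+1)) ^ (-α) ≤ a ^ (-α) :=
          Real.rpow_le_rpow_of_nonpos ha0 hcase (by linarith)
        rw [haneg, hdneg] at h2
        have hyx : y * c ^ M ≤ x := by
          have h3 := mul_le_mul_of_nonneg_right h2 htpos.le
          rw [div_mul_cancel₀ _ htpos.ne', div_mul_cancel₀ _ htpos.ne'] at h3
          exact h3
        rw [hKdef, min_eq_right hyx]
      · rw [hr, max_eq_left hcase, haneg]
        have h2 : a ^ (-α) ≤ (b / c^(k+1)) ^ (-α) :=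
          Real.rpow_le_rpow_of_nonpos (by positivity) hcase (by linarith)
        rw [haneg, hdneg] at h2
        have hxy : x ≤ y * c ^ M := by
          have h3 := mul_le_mul_of_nonneg_right h2 htpos.le
          rw [div_mul_cancel₀ _ htpos.ne', div_mul_cancel₀ _ htpos.ne'] at h3
          exact h3
        rw [hKdef, min_eq_left hxy]
    have hμA : (μ {ω | Y 1 ω > r}).toReal = K / t := by rw [hY1τ r hr1, hrneg]
    have hYid : ∀ ω, Y (1+(k+1)) ω = max (c^(k+1) * Y 1 ω) (auxN c W k ω) := by
      intro ω; rw [show 1+(k+1) = 2+k by omega]; exact hYN k ω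
    -- set inclusions
    have hA_sub : {ω | Y 1 ω > r} ⊆ {ω | Y 1 ω > a ∧ Y (1+(k+1)) ω > b} := by
      intro ω hω
      simp only [Set.mem_setOf_eq] at hω ⊢
      refine ⟨lt_of_le_of_lt (le_max_left _ _) hω, ?_⟩
      rw [hYid ω]
      apply lt_max_iff.mpr; left
      have h1 : b / c^(k+1) < Y 1 ω := lt_of_le_of_lt (le_max_right a _) hω
      calc b = c^(k+1) * (b / c^(k+1)) := by field_simp
      _ < c^(k+1) * Y 1 ω := mul_lt_mul_of_pos_left h1 hcm
    have hE_sub : {ω | Y 1 ω > a ∧ Y (1+(k+1)) ω > b} ⊆ {ω | Y 1 ω > r}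
        ∪ ⋃ i ∈ Finset.range (k+1), ({ω | Y 1 ω > a} ∩ {ω | W (i+2) ω > b/c}) := by
      rintro ω ⟨h1, h2⟩
      rw [hYid ω] at h2
      rcases lt_max_iff.mp h2 with h3 | h3
      · left
        simp only [Set.mem_setOf_eq, hr]
        exact max_lt_iff.mpr ⟨h1, (div_lt_iff₀ hcm).mpr
          (by linarith [mul_comm (c^(k+1)) (Y 1 ω)])⟩
      · right
        have hmem := auxN_subset c W hc0 hc1.le b (by positivity) k
          (show ω ∈ {ω | auxN c W k ω > b} from h3)
        simp only [Set.mem_iUnion, Set.mem_setOf_eq, Finset.mem_range] at hmem ⊢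
        obtain ⟨i, hi, hw⟩ := hmem
        exact ⟨i, hi, h1, hw⟩
    -- measure bounds
    have hEle : μ {ω | Y 1 ω > a ∧ Y (1+(k+1)) ω > b}
        ≤ μ {ω | Y 1 ω > r}
          + ∑ i ∈ Finset.range (k+1), μ ({ω | Y 1 ω > a} ∩ {ω | W (i+2) ω > b/c}) :=
      le_trans (measure_mono hE_sub) (le_trans (measure_union_le _ _)
        (add_le_add le_rfl (measure_biUnion_finset_le _ _)))
    have hsumne : (∑ i ∈ Finset.range (k+1), μ ({ω | Y 1 ω > a} ∩ {ω | W (i+2) ω > b/c})) ≠ ⊤ :=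
      (ENNReal.sum_lt_top.mpr fun i _ => measure_lt_top μ _).ne
    have hEreal : (μ {ω | Y 1 ω > a ∧ Y (1+(k+1)) ω > b}).toReal
        ≤ (μ {ω | Y 1 ω > r}).toReal
          + ∑ i ∈ Finset.range (k+1), (μ ({ω | Y 1 ω > a} ∩ {ω | W (i+2) ω > b/c})).toReal := by
      have h := ENNReal.toReal_mono (ENNReal.add_ne_top.mpr ⟨measure_ne_top μ _, hsumne⟩) hEle
      rwa [ENNReal.toReal_add (measure_ne_top μ _) hsumne,
        ENNReal.toReal_sum (fun i _ => measure_ne_top μ _)] at h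
    have hterm : ∀ i : ℕ, (μ ({ω | Y 1 ω > a} ∩ {ω | W (i+2) ω > b/c})).toReal
        = (x/t) * (1 - (1 - y/t)/(1 - (y/t) * c ^ α)) := by
      intro i
      have hip : {ω | Y 1 ω > a} ∩ {ω | W (i+2) ω > b/c}
          = Y 1 ⁻¹' Set.Ioi a ∩ W (i+2) ⁻¹' Set.Ioi (b/c) := rfl
      rw [hip, (hindY1W i).measure_inter_preimage_eq_mul _ _ measurableSet_Ioi measurableSet_Ioi,
        ENNReal.toReal_mul]
      have h1 : (μ (Y 1 ⁻¹' Set.Ioi a)).toReal = x/t := by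
        rw [show Y 1 ⁻¹' Set.Ioi a = {ω | Y 1 ω > a} from rfl, hY1τ a ha1, haneg]
      have hbc1 : 1/c ≤ b/c := by gcongr
      have h2 : (μ (W (i+2) ⁻¹' Set.Ioi (b/c))).toReal = 1 - (1 - y/t)/(1 - (y/t) * c ^ α) := by
        rw [show W (i+2) ⁻¹' Set.Ioi (b/c) = {ω | W (i+2) ω > b/c} from rfl,
          hWτ (i+2) (by omega) _ hbc1]
        have hcb : c * (b/c) = b := by field_simp
        have hbcneg : (b/c) ^ (-α) = (y/t) * c ^ α := by
          rw [Real.div_rpow hb0.le hc0.le, hbneg, Real.rpow_neg hc0.le, div_inv_eq_mul]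
        rw [hcb, hbneg, hbcneg]
      rw [h1, h2]
    have hsumval : ∑ i ∈ Finset.range (k+1), (μ ({ω | Y 1 ω > a} ∩ {ω | W (i+2) ω > b/c})).toReal
        = ((k:ℝ)+1) * ((x/t) * (1 - (1 - y/t)/(1 - (y/t) * c ^ α))) := by
      rw [Finset.sum_congr rfl (fun i _ => hterm i), Finset.sum_const, Finset.card_range,
        nsmul_eq_mul]
      push_cast
      ring
    constructor
    · have h1 : (μ {ω | Y 1 ω > r}).toReal
          ≤ (μ {ω | Y 1 ω > a ∧ Y (1+(k+1)) ω > b}).toReal :=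
        ENNReal.toReal_mono (measure_ne_top μ _) (measure_mono hA_sub)
      rw [hμA] at h1
      calc K = t * (K/t) := by field_simp
      _ ≤ t * (μ {ω | Y 1 ω > a ∧ Y (1+(k+1)) ω > b}).toReal :=
        mul_le_mul_of_nonneg_left h1 htpos.le
    · have h1 : (μ {ω | Y 1 ω > a ∧ Y (1+(k+1)) ω > b}).toReal
          ≤ K/t + ((k:ℝ)+1) * ((x/t) * (1 - (1 - y/t)/(1 - (y/t) * c ^ α))) := by
        rw [← hμA, ← hsumval]; exact hEreal
      calc t * (μ {ω | Y 1 ω > a ∧ Y (1+(k+1)) ω > b}).toReal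
          ≤ t * (K/t + ((k:ℝ)+1) * ((x/t) * (1 - (1 - y/t)/(1 - (y/t) * c ^ α)))) :=
            mul_le_mul_of_nonneg_left h1 htpos.le
      _ = K + x * ((k:ℝ)+1) * (1 - (1 - y/t)/(1 - (y/t) * c ^ α)) := by
        field_simp
  exact tendsto_of_tendsto_of_tendsto_of_le_of_le' tendsto_const_nhds hub
    (main.mono fun t h => h.1) (main.mono fun t h => h.2)
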